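/- Let G be a perfect graph. A set C = {ρ(W_0), ρ(W_1), ..., ρ(W_q)} of vertices of Stab(G), with the W_i distinct stable sets, is a clique of the 1-skeleton sk(Stab(G)) if and only if for all i ≠ j the induced subgraph of G on W_i △ W_j is a connected bipartite graph. -/

import Mathlib

open Set

variable {V : Type*} [Fintype V]

/-- A stable (independent) set of a graph. -/
def IsStable (G : SimpleGraph V) (W : Set V) : Prop := ∀ a ∈ W, ∀ b ∈ W, ¬ G.Adj a b

/-- The indicator vector of a subset. -/
noncomputable def rho (W : Set V) : V → ℝ := W.indicator 1

/-- The stable set polytope of a graph. -/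
noncomputable def stabPolytope (G : SimpleGraph V) : Set (V → ℝ) :=
  convexHull ℝ {x | ∃ W : Set V, IsStable G W ∧ x = rho W}

/-- `conv {v, w}` is an edge (1-dimensional face) of the polytope `P`. -/
def IsEdgeOf (P : Set (V → ℝ)) (v w : V → ℝ) : Prop :=
  v ≠ w ∧ IsExtreme ℝ P (segment ℝ v w)

/-- A graph is perfect if every induced subgraph has chromatic number equal to clique number. -/
def IsPerfect (G : SimpleGraph V) : Prop :=
  ∀ s : Set V, (G.induce s).chromaticNumber = ((G.induce s).cliqueNum : ℕ∞)

/-- The induced subgraph on `S` is a connected bipartite graph. -/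
def ConnBipartiteIn (G : SimpleGraph V) (S : Set V) : Prop :=
  (G.induce S).Connected ∧ (G.induce S).Colorable 2

/-- The symmetric difference of two sets. -/
def sd (W W' : Set V) : Set V := (W \ W') ∪ (W' \ W)

set_option linter.unusedSectionVars false
set_option maxHeartbeats 1000000

open Finset

attribute [local instance] Classical.propDecidable

lemma rho_apply (W : Set V) (v : V) : rho W v = if v ∈ W then 1 else 0 := by
  simp [rho, Set.indicator_apply]

lemma rho_inj {U U' : Set V} (h : rho U = rho U') : U = U' := by
  ext v
  have := congrFun h v
  rw [rho_apply, rho_apply] at this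
  by_cases h1 : v ∈ U <;> by_cases h2 : v ∈ U' <;> simp_all

lemma mem_sd {W W' : Set V} {v : V} : v ∈ sd W W' ↔ ((v ∈ W ∧ v ∉ W') ∨ (v ∈ W' ∧ v ∉ W)) := by
  simp only [sd, Set.mem_union, Set.mem_diff]

lemma sd_comm (W W' : Set V) : sd W W' = sd W' W := by
  ext v; rw [mem_sd, mem_sd]; tauto

lemma rho_mem_stab {G : SimpleGraph V} {W : Set V} (h : IsStable G W) :
    rho W ∈ stabPolytope G :=
  subset_convexHull ℝ _ ⟨W, h, rfl⟩

lemma segment_01 {U W₁ W₂ : Set V} (h : rho U ∈ segment ℝ (rho W₁) (rho W₂)) :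
    U = W₁ ∨ U = W₂ := by
  by_cases hU : U = W₁
  · exact Or.inl hU
  right
  obtain ⟨a, b, ha, hb, hab, hx⟩ := h
  have hne : U ≠ W₁ := hU
  have : ∃ p, ¬ (p ∈ U ↔ p ∈ W₁) := by
    by_contra hc
    push_neg at hc
    exact hne (Set.ext fun p => hc p)
  obtain ⟨p, hp⟩ := this
  have hxp := congrFun hx p
  rw [rho_apply U p] at hxp
  have hb1 : b = 1 := by
    by_cases h1 : p ∈ W₁
    · have h2 : p ∉ U := fun h' => hp ⟨fun _ => h1, fun _ => h'⟩
      simp only [Pi.add_apply, Pi.smul_apply, rho_apply, if_pos h1, if_neg h2,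
        smul_eq_mul, mul_one] at hxp
      by_cases h3 : p ∈ W₂ <;> simp [h3] at hxp <;> nlinarith
    · have h2 : p ∈ U := by
        by_contra h'
        exact hp ⟨fun h'' => absurd h'' h', fun h'' => absurd h'' h1⟩
      simp only [Pi.add_apply, Pi.smul_apply, rho_apply, if_pos h2, if_neg h1,
        smul_eq_mul, mul_zero, zero_add] at hxp
      by_cases h3 : p ∈ W₂ <;> simp [h3] at hxp <;> nlinarith
  have ha0 : a = 0 := by linarith
  rw [ha0, hb1] at hx
  simp at hx
  exact rho_inj hx.symm

lemma sd_bipartite {G : SimpleGraph V} {W₁ W₂ : Set V}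
    (h1 : IsStable G W₁) (h2 : IsStable G W₂) :
    (G.induce (sd W₁ W₂)).Colorable 2 := by
  refine ⟨⟨fun v => if v.1 ∈ W₁ then 0 else 1, ?_⟩⟩
  rintro ⟨a, ha⟩ ⟨b, hb⟩ hadj
  simp only [SimpleGraph.comap_adj, Function.Embedding.coe_subtype] at hadj
  intro hcol
  by_cases ha1 : a ∈ W₁ <;> by_cases hb1 : b ∈ W₁
  · exact h1 a ha1 b hb1 hadj
  · simp [ha1, hb1] at hcol
  · simp [ha1, hb1] at hcol
  · have ha2 : a ∈ W₂ := by rcases mem_sd.1 ha with h | h; exact absurd h.1 ha1; exact h.1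
    have hb2 : b ∈ W₂ := by rcases mem_sd.1 hb with h | h; exact absurd h.1 hb1; exact h.1
    exact h2 a ha2 b hb2 hadj

lemma swap_stable {G : SimpleGraph V} {W₁ W₂ S : Set V}
    (h1 : IsStable G W₁) (h2 : IsStable G W₂) (hS : S ⊆ sd W₁ W₂)
    (hcross : ∀ a b, a ∈ S → b ∈ sd W₁ W₂ → b ∉ S → ¬ G.Adj a b) :
    IsStable G (sd W₁ S) := by
  intro a ha b hb hadj
  rcases mem_sd.1 ha with ⟨ha1, haS⟩ | ⟨haS, ha1⟩ <;>
    rcases mem_sd.1 hb with ⟨hb1, hbS⟩ | ⟨hbS, hb1⟩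
  · exact h1 a ha1 b hb1 hadj
  · -- a ∈ W₁ \ S, b ∈ S \ W₁ ⊆ W₂
    have hb2 : b ∈ W₂ := by
      rcases mem_sd.1 (hS hbS) with h | h
      · exact absurd h.1 hb1
      · exact h.1
    by_cases ha2 : a ∈ W₂
    · exact h2 a ha2 b hb2 hadj
    · exact hcross b a hbS (mem_sd.2 (Or.inl ⟨ha1, ha2⟩)) haS hadj.symm
  · have ha2 : a ∈ W₂ := by
      rcases mem_sd.1 (hS haS) with h | h
      · exact absurd h.1 ha1
      · exact h.1
    by_cases hb2 : b ∈ W₂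
    · exact h2 a ha2 b hb2 hadj
    · exact hcross a b haS (mem_sd.2 (Or.inl ⟨hb1, hb2⟩)) hbS hadj
  · have ha2 : a ∈ W₂ := by
      rcases mem_sd.1 (hS haS) with h | h
      · exact absurd h.1 ha1
      · exact h.1
    have hb2 : b ∈ W₂ := by
      rcases mem_sd.1 (hS hbS) with h | h
      · exact absurd h.1 hb1
      · exact h.1
    exact h2 a ha2 b hb2 hadj

lemma rho_add_swap {W₁ W₂ S : Set V} (hS : S ⊆ sd W₁ W₂) :
    rho W₁ + rho W₂ = rho (sd W₁ S) + rho (sd W₂ S) := by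
  funext v
  simp only [Pi.add_apply, rho_apply]
  by_cases hv : v ∈ S
  · rcases mem_sd.1 (hS hv) with ⟨h1, h2⟩ | ⟨h2, h1⟩
    · have m1 : v ∉ sd W₁ S := fun h => by
        rcases mem_sd.1 h with h | h
        · exact h.2 hv
        · exact h.2 h1
      have m2 : v ∈ sd W₂ S := mem_sd.2 (Or.inr ⟨hv, h2⟩)
      simp [h1, h2, m1, m2]
    · have m1 : v ∈ sd W₁ S := mem_sd.2 (Or.inr ⟨hv, h1⟩)
      have m2 : v ∉ sd W₂ S := fun h => by
        rcases mem_sd.1 h with h | h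
        · exact h.2 hv
        · exact h.2 h2
      simp [h1, h2, m1, m2]
  · have m1 : v ∈ sd W₁ S ↔ v ∈ W₁ := by
      rw [mem_sd]
      constructor
      · rintro (h | h)
        · exact h.1
        · exact absurd h.1 hv
      · intro h; exact Or.inl ⟨h, hv⟩
    have m2 : v ∈ sd W₂ S ↔ v ∈ W₂ := by
      rw [mem_sd]
      constructor
      · rintro (h | h)
        · exact h.1
        · exact absurd h.1 hv
      · intro h; exact Or.inl ⟨h, hv⟩
    by_cases h1 : v ∈ W₁ <;> by_cases h2 : v ∈ W₂ <;>
      simp [h1, h2, m1.2, m2.2, fun h => hv (by tauto), m1, m2]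

lemma edge_to_connbip {G : SimpleGraph V} {W₁ W₂ : Set V}
    (h1 : IsStable G W₁) (h2 : IsStable G W₂) (hne : W₁ ≠ W₂)
    (h : IsEdgeOf (stabPolytope G) (rho W₁) (rho W₂)) :
    ConnBipartiteIn G (sd W₁ W₂) := by
  have hDne : (sd W₁ W₂).Nonempty := by
    by_contra hD
    push_neg at hD
    apply hne
    ext v
    constructor <;> intro hv <;> by_contra hv'
    · exact absurd (mem_sd.2 (Or.inl ⟨hv, hv'⟩)) (by rw [hD]; exact Set.notMem_empty v)
    · exact absurd (mem_sd.2 (Or.inr ⟨hv, hv'⟩)) (by rw [hD]; exact Set.notMem_empty v)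
  haveI : Nonempty ↥(sd W₁ W₂) := ⟨⟨hDne.choose, hDne.choose_spec⟩⟩
  refine ⟨SimpleGraph.Connected.mk ?_, sd_bipartite h1 h2⟩
  · -- Preconnected
    rintro ⟨u, hu⟩ ⟨y, hy⟩
    by_contra hreach
    set D := sd W₁ W₂ with hD
    set S : Set V := {a | ∃ h : a ∈ D, (G.induce D).Reachable ⟨u, hu⟩ ⟨a, h⟩} with hSdef
    have hSsub : S ⊆ D := fun a ha => ha.1
    have huS : u ∈ S := ⟨hu, SimpleGraph.Reachable.refl _⟩
    have hyS : y ∉ S := fun h => hreach h.2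
    have hcross : ∀ a b, a ∈ S → b ∈ D → b ∉ S → ¬ G.Adj a b := by
      rintro a b ⟨haD, har⟩ hbD hbS hadj
      exact hbS ⟨hbD, har.trans (SimpleGraph.Adj.reachable (by exact hadj))⟩
    have hst1 : IsStable G (sd W₁ S) := swap_stable h1 h2 hSsub hcross
    have hst2 : IsStable G (sd W₂ S) := by
      have hSsub' : S ⊆ sd W₂ W₁ := by rw [sd_comm W₂ W₁]; exact hSsub
      have hcross' : ∀ a b, a ∈ S → b ∈ sd W₂ W₁ → b ∉ S → ¬ G.Adj a b := by
        rw [sd_comm W₂ W₁]; exact hcross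
      exact swap_stable h2 h1 hSsub' hcross'
    have hmem1 : rho (sd W₁ S) ∈ stabPolytope G := rho_mem_stab hst1
    have hmem2 : rho (sd W₂ S) ∈ stabPolytope G := rho_mem_stab hst2
    have hsum : rho W₁ + rho W₂ = rho (sd W₁ S) + rho (sd W₂ S) := rho_add_swap hSsub
    set m : V → ℝ := (1/2 : ℝ) • rho W₁ + (1/2 : ℝ) • rho W₂ with hm
    have hmseg : m ∈ segment ℝ (rho W₁) (rho W₂) :=
      ⟨1/2, 1/2, by norm_num, by norm_num, by norm_num, rfl⟩
    have hmopen : m ∈ openSegment ℝ (rho (sd W₁ S)) (rho (sd W₂ S)) := by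
      refine ⟨1/2, 1/2, by norm_num, by norm_num, by norm_num, ?_⟩
      rw [hm]
      rw [← smul_add, ← smul_add, hsum]
    have hex := h.2.2 hmem1 hmem2 hmseg hmopen
    rcases segment_01 hex with heq | heq
    · -- sd W₁ S = W₁, but u differs
      have : u ∈ sd W₁ S ↔ u ∉ W₁ := by
        rw [mem_sd]
        constructor
        · rintro (h | h)
          · exact absurd huS h.2
          · exact h.2
        · intro h
          have hu2 : u ∈ W₁ ∨ u ∈ W₂ := by
            rcases mem_sd.1 hu with hh | hh
            · exact Or.inl hh.1
            · exact Or.inr hh.1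
          exact Or.inr ⟨huS, h⟩
      rw [heq] at this
      tauto
    · -- sd W₁ S = W₂, but y ∉ S
      have hyIff : y ∈ sd W₁ S ↔ y ∈ W₁ := by
        rw [mem_sd]
        constructor
        · rintro (h | h)
          · exact h.1
          · exact absurd h.1 hyS
        · intro h; exact Or.inl ⟨h, hyS⟩
      rw [heq] at hyIff
      rcases mem_sd.1 hy with hh | hh
      · exact hh.2 (hyIff.2 hh.1)
      · exact hh.2 (hyIff.1 hh.1)

noncomputable def auxDeg (G : SimpleGraph V) (D : Set V) (v : V) : ℕ :=
  (Finset.univ.filter (fun u => u ∈ D ∧ G.Adj v u)).card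

noncomputable def auxT (G : SimpleGraph V) (D S : Set V) : ℝ :=
  ∑ v, ∑ u, if v ∈ S ∧ u ∈ D ∧ G.Adj v u then (1:ℝ) else 0

lemma auxT_nonneg (G : SimpleGraph V) (D S : Set V) : 0 ≤ auxT G D S := by
  apply Finset.sum_nonneg; intro v _
  apply Finset.sum_nonneg; intro u _
  positivity

lemma degsum (G : SimpleGraph V) (D S : Set V) :
    ∑ v, (if v ∈ S then (auxDeg G D v : ℝ) else 0) = auxT G D S := by
  unfold auxT
  apply Finset.sum_congr rfl
  intro v _
  by_cases hv : v ∈ S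
  · rw [if_pos hv, auxDeg, Finset.card_filter]
    push_cast
    apply Finset.sum_congr rfl
    intro u _
    by_cases h : u ∈ D ∧ G.Adj v u
    · rw [if_pos h, if_pos ⟨hv, h⟩]
    · rw [if_neg h, if_neg (fun hh => h ⟨hh.2.1, hh.2.2⟩)]
  · rw [if_neg hv]
    symm
    apply Finset.sum_eq_zero
    intro u _
    rw [if_neg (fun hh => hv hh.1)]

lemma auxT_symm (G : SimpleGraph V) (D S : Set V) :
    auxT G D S = ∑ v, ∑ u, if u ∈ S ∧ v ∈ D ∧ G.Adj v u then (1:ℝ) else 0 := by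
  unfold auxT
  rw [Finset.sum_comm]
  apply Finset.sum_congr rfl; intro v _
  apply Finset.sum_congr rfl; intro u _
  congr 1
  simp only [eq_iff_iff]
  constructor
  · rintro ⟨h1, h2, h3⟩; exact ⟨h1, h2, h3.symm⟩
  · rintro ⟨h1, h2, h3⟩; exact ⟨h1, h2, h3.symm⟩

lemma two_auxT_le (G : SimpleGraph V) (D S : Set V) (hS : S ⊆ D)
    (hst : ∀ a ∈ S, ∀ b ∈ S, ¬ G.Adj a b) :
    auxT G D S + auxT G D S ≤ auxT G D D := by
  nth_rewrite 2 [auxT_symm]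
  unfold auxT
  rw [← Finset.sum_add_distrib]
  apply Finset.sum_le_sum
  intro v _
  rw [← Finset.sum_add_distrib]
  apply Finset.sum_le_sum
  intro u _
  by_cases h1 : v ∈ S ∧ u ∈ D ∧ G.Adj v u
  · have h2 : ¬ (u ∈ S ∧ v ∈ D ∧ G.Adj v u) := fun hh => hst v h1.1 u hh.1 h1.2.2
    rw [if_pos h1, if_neg h2, if_pos ⟨hS h1.1, h1.2.1, h1.2.2⟩]; norm_num
  · rw [if_neg h1]
    by_cases h2 : u ∈ S ∧ v ∈ D ∧ G.Adj v u
    · rw [if_pos h2, if_pos ⟨h2.2.1, hS h2.1, h2.2.2⟩]; norm_num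
    · rw [if_neg h2]
      split <;> norm_num

lemma two_auxT_eq (G : SimpleGraph V) (D A : Set V) (hA : A ⊆ D)
    (hst : ∀ a ∈ A, ∀ b ∈ A, ¬ G.Adj a b)
    (hcov : ∀ v ∈ D, ∀ u ∈ D, G.Adj v u → v ∈ A ∨ u ∈ A) :
    auxT G D A + auxT G D A = auxT G D D := by
  nth_rewrite 3 [auxT]
  nth_rewrite 2 [auxT_symm]
  unfold auxT
  rw [← Finset.sum_add_distrib]
  apply Finset.sum_congr rfl
  intro v _
  rw [← Finset.sum_add_distrib]
  apply Finset.sum_congr rfl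
  intro u _
  by_cases h1 : v ∈ A ∧ u ∈ D ∧ G.Adj v u
  · have h2 : ¬ (u ∈ A ∧ v ∈ D ∧ G.Adj v u) := fun hh => hst v h1.1 u hh.1 h1.2.2
    rw [if_pos h1, if_neg h2, if_pos ⟨hA h1.1, h1.2.1, h1.2.2⟩]; norm_num
  · rw [if_neg h1]
    by_cases h2 : u ∈ A ∧ v ∈ D ∧ G.Adj v u
    · rw [if_pos h2, if_pos ⟨h2.2.1, hA h2.1, h2.2.2⟩]; norm_num
    · rw [if_neg h2]
      by_cases h3 : v ∈ D ∧ u ∈ D ∧ G.Adj v u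
      · exfalso
        rcases hcov v h3.1 u h3.2.1 h3.2.2 with h | h
        · exact h1 ⟨h, h3.2.1, h3.2.2⟩
        · exact h2 ⟨h, h3.1, h3.2.2⟩
      · rw [if_neg h3]; norm_num

lemma auxT_eq_cover (G : SimpleGraph V) (D S : Set V) (hS : S ⊆ D)
    (hst : ∀ a ∈ S, ∀ b ∈ S, ¬ G.Adj a b)
    (heq : auxT G D S + auxT G D S = auxT G D D) :
    ∀ v ∈ D, ∀ u ∈ D, G.Adj v u → v ∈ S ∨ u ∈ S := by
  intro v hv u hu hadj
  by_contra hc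
  push_neg at hc
  -- strict inequality at the (v,u) term
  have hlt : auxT G D S + auxT G D S < auxT G D D := by
    nth_rewrite 3 [auxT]
    nth_rewrite 2 [auxT_symm]
    unfold auxT
    rw [← Finset.sum_add_distrib]
    apply Finset.sum_lt_sum
    · intro i _
      rw [← Finset.sum_add_distrib]
      apply Finset.sum_le_sum
      intro j _
      by_cases h1 : i ∈ S ∧ j ∈ D ∧ G.Adj i j
      · have h2 : ¬ (j ∈ S ∧ i ∈ D ∧ G.Adj i j) := fun hh => hst i h1.1 j hh.1 h1.2.2
        rw [if_pos h1, if_neg h2, if_pos ⟨hS h1.1, h1.2.1, h1.2.2⟩]; norm_num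
      · rw [if_neg h1]
        by_cases h2 : j ∈ S ∧ i ∈ D ∧ G.Adj i j
        · rw [if_pos h2, if_pos ⟨h2.2.1, hS h2.1, h2.2.2⟩]; norm_num
        · rw [if_neg h2]; split <;> norm_num
    · refine ⟨v, Finset.mem_univ v, ?_⟩
      rw [← Finset.sum_add_distrib]
      apply Finset.sum_lt_sum
      · intro j _
        by_cases h1 : v ∈ S ∧ j ∈ D ∧ G.Adj v j
        · have h2 : ¬ (j ∈ S ∧ v ∈ D ∧ G.Adj v j) := fun hh => hst v h1.1 j hh.1 h1.2.2
          rw [if_pos h1, if_neg h2, if_pos ⟨hS h1.1, h1.2.1, h1.2.2⟩]; norm_num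
        · rw [if_neg h1]
          by_cases h2 : j ∈ S ∧ v ∈ D ∧ G.Adj v j
          · rw [if_pos h2, if_pos ⟨h2.2.1, hS h2.1, h2.2.2⟩]; norm_num
          · rw [if_neg h2]; split <;> norm_num
      · refine ⟨u, Finset.mem_univ u, ?_⟩
        rw [if_neg (fun hh => hc.1 hh.1), if_neg (fun hh => hc.2 hh.1),
          if_pos ⟨hv, hu, hadj⟩]
        norm_num
  linarith

lemma walk_parity {G : SimpleGraph V} {D : Set V} (P Q : V → Prop)
    (hP : ∀ a b : ↥D, (G.induce D).Adj a b → (P a.1 ↔ ¬ P b.1))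
    (hQ : ∀ a b : ↥D, (G.induce D).Adj a b → (Q a.1 ↔ ¬ Q b.1)) :
    ∀ a b : ↥D, (G.induce D).Reachable a b → ((P a.1 ↔ Q a.1) → (P b.1 ↔ Q b.1)) := by
  intro a b hr
  obtain ⟨w⟩ := hr
  induction w with
  | nil => exact id
  | @cons x y z hadj w ih =>
    intro hx
    apply ih
    have h1 := hP x y hadj
    have h2 := hQ x y hadj
    tauto

lemma bipartition_unique {G : SimpleGraph V} {W₁ W₂ S : Set V}
    (h1 : IsStable G W₁) (h2 : IsStable G W₂)
    (hconn : (G.induce (sd W₁ W₂)).Connected)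
    (hS : S ⊆ sd W₁ W₂)
    (hstS : ∀ a ∈ S, ∀ b ∈ S, ¬ G.Adj a b)
    (hcov : ∀ v ∈ sd W₁ W₂, ∀ u ∈ sd W₁ W₂, G.Adj v u → v ∈ S ∨ u ∈ S) :
    S = W₁ \ W₂ ∨ S = W₂ \ W₁ := by
  set D := sd W₁ W₂ with hD
  have hPflip : ∀ a b : ↥D, (G.induce D).Adj a b → ((a.1 ∈ S) ↔ ¬ (b.1 ∈ S)) := by
    rintro ⟨a, ha⟩ ⟨b, hb⟩ hadj
    simp only [SimpleGraph.comap_adj, Function.Embedding.coe_subtype] at hadj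
    constructor
    · intro haS hbS
      exact hstS a haS b hbS hadj
    · intro hbS
      rcases hcov a ha b hb hadj with h | h
      · exact h
      · exact absurd h hbS
  have hQ1flip : ∀ a b : ↥D, (G.induce D).Adj a b → ((a.1 ∈ W₁) ↔ ¬ (b.1 ∈ W₁)) := by
    rintro ⟨a, ha⟩ ⟨b, hb⟩ hadj
    simp only [SimpleGraph.comap_adj, Function.Embedding.coe_subtype] at hadj
    constructor
    · intro ha1 hb1
      exact h1 a ha1 b hb1 hadj
    · intro hb1
      by_contra ha1
      have ha2 : a ∈ W₂ := by rcases mem_sd.1 ha with h | h; exact absurd h.1 ha1; exact h.1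
      have hb2 : b ∈ W₂ := by rcases mem_sd.1 hb with h | h; exact absurd h.1 hb1; exact h.1
      exact h2 a ha2 b hb2 hadj
  have hQ2flip : ∀ a b : ↥D, (G.induce D).Adj a b → ((a.1 ∈ W₂) ↔ ¬ (b.1 ∈ W₂)) := by
    rintro ⟨a, ha⟩ ⟨b, hb⟩ hadj
    simp only [SimpleGraph.comap_adj, Function.Embedding.coe_subtype] at hadj
    constructor
    · intro ha2 hb2
      exact h2 a ha2 b hb2 hadj
    · intro hb2
      by_contra ha2
      have ha1 : a ∈ W₁ := by rcases mem_sd.1 ha with h | h; exact h.1; exact absurd h.1 ha2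
      have hb1 : b ∈ W₁ := by rcases mem_sd.1 hb with h | h; exact h.1; exact absurd h.1 hb2
      exact h1 a ha1 b hb1 hadj
  have hne : Nonempty ↥D := hconn.nonempty
  obtain ⟨v₀, hv₀⟩ := hne.some
  have hmemD : ∀ v ∈ D, (v ∈ W₁ ↔ v ∉ W₂) := by
    intro v hv
    rcases mem_sd.1 hv with h | h
    · exact ⟨fun _ => h.2, fun _ => h.1⟩
    · exact ⟨fun hh => absurd hh h.2, fun hh => absurd h.1 hh⟩
  by_cases h₀ : v₀ ∈ S ↔ v₀ ∈ W₁
  · left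
    have hall : ∀ v : ↥D, (v.1 ∈ S ↔ v.1 ∈ W₁) := by
      intro v
      exact walk_parity (· ∈ S) (· ∈ W₁) hPflip hQ1flip ⟨v₀, hv₀⟩ v
        (hconn.preconnected ⟨v₀, hv₀⟩ v) h₀
    ext v
    constructor
    · intro hvS
      have hvD : v ∈ D := hS hvS
      have := (hall ⟨v, hvD⟩).1 hvS
      exact ⟨this, (hmemD v hvD).1 this⟩
    · intro hv
      have hvD : v ∈ D := mem_sd.2 (Or.inl ⟨hv.1, hv.2⟩)
      exact (hall ⟨v, hvD⟩).2 hv.1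
  · right
    have h₀' : v₀ ∈ S ↔ v₀ ∈ W₂ := by
      have := hmemD v₀ hv₀
      tauto
    have hall : ∀ v : ↥D, (v.1 ∈ S ↔ v.1 ∈ W₂) := by
      intro v
      exact walk_parity (· ∈ S) (· ∈ W₂) hPflip hQ2flip ⟨v₀, hv₀⟩ v
        (hconn.preconnected ⟨v₀, hv₀⟩ v) h₀'
    ext v
    constructor
    · intro hvS
      have hvD : v ∈ D := hS hvS
      have := (hall ⟨v, hvD⟩).1 hvS
      exact ⟨this, fun h => ((hmemD v hvD).1 h) this⟩
    · intro hv
      have hvD : v ∈ D := mem_sd.2 (Or.inr ⟨hv.1, hv.2⟩)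
      exact (hall ⟨v, hvD⟩).2 hv.1

noncomputable def auxC (G : SimpleGraph V) (W₁ W₂ : Set V) (v : V) : ℝ :=
  if v ∈ W₁ ∩ W₂ then 1
  else if v ∈ sd W₁ W₂ then (auxDeg G (sd W₁ W₂) v : ℝ) else -1

noncomputable def auxF (G : SimpleGraph V) (W₁ W₂ : Set V) : (V → ℝ) →ₗ[ℝ] ℝ where
  toFun := fun x => ∑ v, auxC G W₁ W₂ v * x v
  map_add' := by
    intro x y
    rw [← Finset.sum_add_distrib]
    apply Finset.sum_congr rfl
    intro v _
    simp [mul_add]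
  map_smul' := by
    intro c x
    simp only [Pi.smul_apply, smul_eq_mul, RingHom.id_apply]
    rw [Finset.mul_sum]
    exact Finset.sum_congr rfl fun v _ => by ring

lemma auxF_rho (G : SimpleGraph V) (W₁ W₂ W : Set V) :
    auxF G W₁ W₂ (rho W) =
      (∑ v, if v ∈ W ∩ (W₁ ∩ W₂) then (1:ℝ) else 0)
      + auxT G (sd W₁ W₂) (W ∩ sd W₁ W₂)
      - (∑ v, if v ∈ W ∧ v ∉ W₁ ∧ v ∉ W₂ then (1:ℝ) else 0) := by
  rw [← degsum G (sd W₁ W₂) (W ∩ sd W₁ W₂)]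
  show (∑ v, auxC G W₁ W₂ v * rho W v) = _
  rw [← Finset.sum_add_distrib, ← Finset.sum_sub_distrib]
  apply Finset.sum_congr rfl
  intro v _
  rw [rho_apply, auxC]
  by_cases hW : v ∈ W
  · rw [if_pos hW, mul_one]
    by_cases hI : v ∈ W₁ ∩ W₂
    · have hD : v ∉ sd W₁ W₂ := fun h => by
        rcases mem_sd.1 h with h | h
        · exact h.2 hI.2
        · exact h.2 hI.1
      rw [if_pos hI, if_pos ⟨hW, hI⟩, if_neg (fun hh : v ∈ W ∩ sd W₁ W₂ => hD hh.2),
        if_neg (fun h => h.2.1 hI.1)]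
      norm_num
    · by_cases hD : v ∈ sd W₁ W₂
      · rw [if_neg hI, if_pos hD, if_neg (fun h : v ∈ W ∩ (W₁ ∩ W₂) => hI h.2),
          if_pos ⟨hW, hD⟩]
        have : ¬ (v ∈ W ∧ v ∉ W₁ ∧ v ∉ W₂) := by
          rintro ⟨_, h1, h2⟩
          rcases mem_sd.1 hD with h | h
          · exact h1 h.1
          · exact h2 h.1
        rw [if_neg this]
        norm_num
      · have hn1 : v ∉ W₁ := by
          intro h
          by_cases h2 : v ∈ W₂
          · exact hI ⟨h, h2⟩
          · exact hD (mem_sd.2 (Or.inl ⟨h, h2⟩))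
        have hn2 : v ∉ W₂ := by
          intro h
          by_cases h1 : v ∈ W₁
          · exact hI ⟨h1, h⟩
          · exact hD (mem_sd.2 (Or.inr ⟨h, h1⟩))
        rw [if_neg hI, if_neg hD, if_neg (fun h : v ∈ W ∩ (W₁ ∩ W₂) => hI h.2),
          if_neg (fun h : v ∈ W ∩ sd W₁ W₂ => hD h.2), if_pos ⟨hW, hn1, hn2⟩]
        norm_num
  · rw [if_neg hW, mul_zero, if_neg (fun h : v ∈ W ∩ (W₁ ∩ W₂) => hW h.1),
      if_neg (fun h : v ∈ W ∩ sd W₁ W₂ => hW h.1), if_neg (fun h => hW h.1)]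
    norm_num

section
variable {G : SimpleGraph V} {W₁ W₂ : Set V}

lemma hA_sub : W₁ \ W₂ ⊆ sd W₁ W₂ := fun v hv => mem_sd.2 (Or.inl ⟨hv.1, hv.2⟩)
lemma hB_sub : W₂ \ W₁ ⊆ sd W₁ W₂ := fun v hv => mem_sd.2 (Or.inr ⟨hv.1, hv.2⟩)

lemma hA_stable (h1 : IsStable G W₁) : ∀ a ∈ W₁ \ W₂, ∀ b ∈ W₁ \ W₂, ¬ G.Adj a b :=
  fun a ha b hb => h1 a ha.1 b hb.1

lemma hB_stable (h2 : IsStable G W₂) : ∀ a ∈ W₂ \ W₁, ∀ b ∈ W₂ \ W₁, ¬ G.Adj a b :=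
  fun a ha b hb => h2 a ha.1 b hb.1

lemma hA_cov (h2 : IsStable G W₂) :
    ∀ v ∈ sd W₁ W₂, ∀ u ∈ sd W₁ W₂, G.Adj v u → v ∈ W₁ \ W₂ ∨ u ∈ W₁ \ W₂ := by
  intro v hv u hu hadj
  by_contra hc
  push_neg at hc
  have hv2 : v ∈ W₂ := by
    rcases mem_sd.1 hv with h | h
    · exact absurd ⟨h.1, h.2⟩ hc.1
    · exact h.1
  have hu2 : u ∈ W₂ := by
    rcases mem_sd.1 hu with h | h
    · exact absurd ⟨h.1, h.2⟩ hc.2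
    · exact h.1
  exact h2 v hv2 u hu2 hadj

lemma hB_cov (h1 : IsStable G W₁) :
    ∀ v ∈ sd W₁ W₂, ∀ u ∈ sd W₁ W₂, G.Adj v u → v ∈ W₂ \ W₁ ∨ u ∈ W₂ \ W₁ := by
  intro v hv u hu hadj
  by_contra hc
  push_neg at hc
  have hv1 : v ∈ W₁ := by
    rcases mem_sd.1 hv with h | h
    · exact h.1
    · exact absurd ⟨h.1, h.2⟩ hc.1
  have hu1 : u ∈ W₁ := by
    rcases mem_sd.1 hu with h | h
    · exact h.1
    · exact absurd ⟨h.1, h.2⟩ hc.2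
  exact h1 v hv1 u hu1 hadj

lemma auxT_AB (h1 : IsStable G W₁) (h2 : IsStable G W₂) :
    auxT G (sd W₁ W₂) (W₁ \ W₂) = auxT G (sd W₁ W₂) (W₂ \ W₁) := by
  have hA := two_auxT_eq G (sd W₁ W₂) (W₁ \ W₂) hA_sub (hA_stable h1) (hA_cov h2)
  have hB := two_auxT_eq G (sd W₁ W₂) (W₂ \ W₁) hB_sub (hB_stable h2) (hB_cov h1)
  linarith

lemma auxF_val1 : auxF G W₁ W₂ (rho W₁) =
    (∑ v, if v ∈ W₁ ∩ W₂ then (1:ℝ) else 0) + auxT G (sd W₁ W₂) (W₁ \ W₂) := by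
  rw [auxF_rho]
  have e1 : W₁ ∩ (W₁ ∩ W₂) = W₁ ∩ W₂ := by ext v; simp only [Set.mem_inter_iff]; tauto
  have e2 : W₁ ∩ sd W₁ W₂ = W₁ \ W₂ := by
    ext v; simp only [Set.mem_inter_iff, mem_sd, Set.mem_diff]; tauto
  have e3 : (∑ v, if v ∈ W₁ ∧ v ∉ W₁ ∧ v ∉ W₂ then (1:ℝ) else 0) = 0 := by
    apply Finset.sum_eq_zero
    intro v _
    rw [if_neg (fun h => h.2.1 h.1)]
  simp only [e1, e2, e3, sub_zero]

lemma auxF_val2 (h1 : IsStable G W₁) (h2 : IsStable G W₂) :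
    auxF G W₁ W₂ (rho W₂) = auxF G W₁ W₂ (rho W₁) := by
  rw [auxF_rho, auxF_val1]
  have e1 : W₂ ∩ (W₁ ∩ W₂) = W₁ ∩ W₂ := by ext v; simp only [Set.mem_inter_iff]; tauto
  have e2 : W₂ ∩ sd W₁ W₂ = W₂ \ W₁ := by
    ext v; simp only [Set.mem_inter_iff, mem_sd, Set.mem_diff]; tauto
  have e3 : (∑ v, if v ∈ W₂ ∧ v ∉ W₁ ∧ v ∉ W₂ then (1:ℝ) else 0) = 0 := by
    apply Finset.sum_eq_zero
    intro v _
    rw [if_neg (fun h => h.2.2 h.1)]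
  simp only [e1, e2, e3, sub_zero]
  rw [auxT_AB h1 h2]

lemma auxF_ineq_parts (h1 : IsStable G W₁) (h2 : IsStable G W₂) {W : Set V}
    (hW : IsStable G W) :
    ((∑ v, if v ∈ W ∩ (W₁ ∩ W₂) then (1:ℝ) else 0) ≤ ∑ v, if v ∈ W₁ ∩ W₂ then (1:ℝ) else 0)
    ∧ auxT G (sd W₁ W₂) (W ∩ sd W₁ W₂) ≤ auxT G (sd W₁ W₂) (W₁ \ W₂)
    ∧ 0 ≤ (∑ v, if v ∈ W ∧ v ∉ W₁ ∧ v ∉ W₂ then (1:ℝ) else 0) := by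
  refine ⟨?_, ?_, ?_⟩
  · apply Finset.sum_le_sum
    intro v _
    by_cases h : v ∈ W ∩ (W₁ ∩ W₂)
    · rw [if_pos h, if_pos h.2]
    · rw [if_neg h]
      split <;> norm_num
  · have hle := two_auxT_le G (sd W₁ W₂) (W ∩ sd W₁ W₂)
      (fun v hv => hv.2) (fun a ha b hb => hW a ha.1 b hb.1)
    have hAe := two_auxT_eq G (sd W₁ W₂) (W₁ \ W₂) hA_sub (hA_stable h1) (hA_cov h2)
    linarith
  · apply Finset.sum_nonneg
    intro v _
    split <;> norm_num

lemma auxF_le (h1 : IsStable G W₁) (h2 : IsStable G W₂) {W : Set V}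
    (hW : IsStable G W) : auxF G W₁ W₂ (rho W) ≤ auxF G W₁ W₂ (rho W₁) := by
  obtain ⟨p1, p2, p3⟩ := auxF_ineq_parts h1 h2 hW
  rw [auxF_rho, auxF_val1]
  linarith

lemma auxF_eq_cases (h1 : IsStable G W₁) (h2 : IsStable G W₂)
    (hconn : (G.induce (sd W₁ W₂)).Connected) {W : Set V} (hW : IsStable G W)
    (heq : auxF G W₁ W₂ (rho W) = auxF G W₁ W₂ (rho W₁)) : W = W₁ ∨ W = W₂ := by
  obtain ⟨p1, p2, p3⟩ := auxF_ineq_parts h1 h2 hW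
  rw [auxF_rho, auxF_val1] at heq
  -- all three inequalities are equalities
  have e1 : (∑ v, if v ∈ W ∩ (W₁ ∩ W₂) then (1:ℝ) else 0)
      = ∑ v, if v ∈ W₁ ∩ W₂ then (1:ℝ) else 0 := by linarith
  have e2 : auxT G (sd W₁ W₂) (W ∩ sd W₁ W₂) = auxT G (sd W₁ W₂) (W₁ \ W₂) := by linarith
  have e3 : (∑ v, if v ∈ W ∧ v ∉ W₁ ∧ v ∉ W₂ then (1:ℝ) else 0) = 0 := by linarith
  -- consequences
  have hIW : W₁ ∩ W₂ ⊆ W := by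
    intro v hv
    have hterm := (Finset.sum_eq_sum_iff_of_le (f := fun v => if v ∈ W ∩ (W₁ ∩ W₂) then (1:ℝ) else 0)
      (g := fun v => if v ∈ W₁ ∩ W₂ then (1:ℝ) else 0) ?_).1 e1 v (Finset.mem_univ v)
    · by_contra hvW
      rw [if_pos hv, if_neg (fun h : v ∈ W ∩ (W₁ ∩ W₂) => hvW h.1)] at hterm
      norm_num at hterm
    · intro i _
      by_cases h : i ∈ W ∩ (W₁ ∩ W₂)
      · rw [if_pos h, if_pos h.2]
      · rw [if_neg h]; split <;> norm_num
  have hWsub : W ⊆ W₁ ∪ W₂ := by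
    intro v hv
    have hterm := (Finset.sum_eq_zero_iff_of_nonneg
      (f := fun v => if v ∈ W ∧ v ∉ W₁ ∧ v ∉ W₂ then (1:ℝ) else 0)
      (fun i _ => by split <;> norm_num)).1 e3 v (Finset.mem_univ v)
    by_contra hv'
    simp only [Set.mem_union] at hv'
    push_neg at hv'
    rw [if_pos ⟨hv, hv'.1, hv'.2⟩] at hterm
    norm_num at hterm
  have hAe := two_auxT_eq G (sd W₁ W₂) (W₁ \ W₂) hA_sub (hA_stable h1) (hA_cov h2)
  have hcover := auxT_eq_cover G (sd W₁ W₂) (W ∩ sd W₁ W₂)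
    (fun v hv => hv.2) (fun a ha b hb => hW a ha.1 b hb.1) (by linarith)
  have hSAB := bipartition_unique h1 h2 hconn
    (fun v (hv : v ∈ W ∩ sd W₁ W₂) => hv.2) (fun a ha b hb => hW a ha.1 b hb.1) hcover
  have hWeq : W = (W₁ ∩ W₂) ∪ (W ∩ sd W₁ W₂) := by
    ext v
    constructor
    · intro hv
      by_cases h12 : v ∈ W₁ ∩ W₂
      · exact Or.inl h12
      · right
        refine ⟨hv, ?_⟩
        rcases hWsub hv with h | h
        · exact mem_sd.2 (Or.inl ⟨h, fun h2 => h12 ⟨h, h2⟩⟩)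
        · exact mem_sd.2 (Or.inr ⟨h, fun h1 => h12 ⟨h1, h⟩⟩)
    · rintro (hv | hv)
      · exact hIW hv
      · exact hv.1
  rcases hSAB with hS | hS
  · left
    rw [hWeq, hS]
    ext v
    simp only [Set.mem_union, Set.mem_inter_iff, Set.mem_diff]
    tauto
  · right
    rw [hWeq, hS]
    ext v
    simp only [Set.mem_union, Set.mem_inter_iff, Set.mem_diff]
    tauto
end

lemma face_subset_segment {G : SimpleGraph V} {W₁ W₂ : Set V}
    (h1 : IsStable G W₁) (h2 : IsStable G W₂)
    (hconn : (G.induce (sd W₁ W₂)).Connected) :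
    ∀ x ∈ stabPolytope G, auxF G W₁ W₂ x = auxF G W₁ W₂ (rho W₁) →
      x ∈ segment ℝ (rho W₁) (rho W₂) := by
  intro x hx hfx
  set f := auxF G W₁ W₂ with hf
  set b := f (rho W₁) with hb
  set gen : Set (V → ℝ) := {x | ∃ W : Set V, IsStable G W ∧ x = rho W} with hgen
  have hfin : gen.Finite := by
    apply Set.Finite.subset (Set.finite_range (rho (W := ·) : Set V → (V → ℝ)))
    rintro y ⟨Wy, _, rfl⟩
    exact ⟨Wy, rfl⟩
  rw [stabPolytope, hfin.convexHull_eq] at hx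
  obtain ⟨w, hw0, hwsum, hcm⟩ := hx
  rw [Finset.centerMass_eq_of_sum_1 _ id hwsum] at hcm
  -- x = ∑ y in t, w y • y
  set t := hfin.toFinset with ht
  have hyb : ∀ y ∈ t, f y ≤ b := by
    intro y hy
    rw [ht, Set.Finite.mem_toFinset] at hy
    obtain ⟨Wy, hWy, rfl⟩ := hy
    exact auxF_le h1 h2 hWy
  have hfx' : f x = ∑ y ∈ t, w y * f y := by
    rw [← hcm]
    rw [map_sum]
    apply Finset.sum_congr rfl
    intro y _
    simp [f]
  have hzero : ∑ y ∈ t, w y * (b - f y) = 0 := by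
    have : ∑ y ∈ t, w y * (b - f y) = (∑ y ∈ t, w y * b) - ∑ y ∈ t, w y * f y := by
      rw [← Finset.sum_sub_distrib]
      apply Finset.sum_congr rfl
      intro y _; ring
    rw [this, ← Finset.sum_mul, hwsum, one_mul, ← hfx', hfx]
    ring
  have hterm := (Finset.sum_eq_zero_iff_of_nonneg (fun y hy =>
    mul_nonneg (hw0 y (by rwa [← Set.Finite.mem_toFinset hfin])) (by
      have := hyb y hy; linarith))).1 hzero
  have hmem : ∀ y ∈ t, w y ≠ 0 → y ∈ ({rho W₁, rho W₂} : Set (V → ℝ)) := by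
    intro y hy hwne
    have h0 := hterm y hy
    have hfy : f y = b := by
      rcases mul_eq_zero.1 h0 with h | h
      · exact absurd h hwne
      · linarith
    have hy' := hy
    rw [ht, Set.Finite.mem_toFinset] at hy'
    obtain ⟨Wy, hWy, rfl⟩ := hy'
    rcases auxF_eq_cases h1 h2 hconn hWy hfy with h | h
    · exact Or.inl (by rw [h])
    · exact Or.inr (by rw [h]; rfl)
  -- restrict to nonzero weights
  set t' := t.filter (fun y => w y ≠ 0) with ht'
  have hsum' : ∑ y ∈ t', w y = 1 := by
    rw [← hwsum, ht']
    exact Finset.sum_filter_ne_zero t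
  have hx' : x = ∑ y ∈ t', w y • y := by
    rw [← hcm]
    symm
    apply Finset.sum_subset (Finset.filter_subset _ _)
    intro y hy hyn
    have hw : w y = 0 := by
      by_contra h'
      exact hyn (Finset.mem_filter.2 ⟨hy, h'⟩)
    rw [hw, zero_smul]
  have hxhull : x ∈ convexHull ℝ ({rho W₁, rho W₂} : Set (V → ℝ)) := by
    have := Finset.centerMass_mem_convexHull t'
      (fun y hy => hw0 y (by
        rw [ht', Finset.mem_filter, ht, Set.Finite.mem_toFinset] at hy
        exact hy.1))
      (by rw [hsum']; norm_num)
      (z := id)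
      (fun y hy => by
        rw [ht', Finset.mem_filter] at hy
        exact hmem y hy.1 hy.2)
    rw [Finset.centerMass_eq_of_sum_1 _ id hsum'] at this
    simp only [id_eq] at this
    rwa [← hx'] at this
  rwa [convexHull_pair] at hxhull

lemma connbip_to_edge {G : SimpleGraph V} {W₁ W₂ : Set V}
    (h1 : IsStable G W₁) (h2 : IsStable G W₂) (hne : W₁ ≠ W₂)
    (hconn : (G.induce (sd W₁ W₂)).Connected) :
    IsEdgeOf (stabPolytope G) (rho W₁) (rho W₂) := by
  set f := auxF G W₁ W₂ with hf
  set b := f (rho W₁) with hb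
  have hle : ∀ x ∈ stabPolytope G, f x ≤ b := by
    intro x hx
    have hsub : stabPolytope G ⊆ {y | f y ≤ b} := by
      apply convexHull_min
      · rintro y ⟨Wy, hWy, rfl⟩
        exact auxF_le h1 h2 hWy
      · exact convex_halfSpace_le (LinearMap.isLinear f) b
    exact hsub hx
  refine ⟨fun h => hne (rho_inj h), ?_, ?_⟩
  · exact (convex_convexHull ℝ _).segment_subset (rho_mem_stab h1) (rho_mem_stab h2)
  · intro x₁ hx₁ x₂ hx₂ x hxseg hxopen
    have hfxb : f x = b := by
      obtain ⟨a, c, ha, hc, hac, rfl⟩ := hxseg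
      have : f (a • rho W₁ + c • rho W₂) = a * f (rho W₁) + c * f (rho W₂) := by
        simp [f]
      rw [this, auxF_val2 h1 h2, ← hb]
      linear_combination b * hac
    obtain ⟨a, c, ha, hc, hac, hxeq⟩ := hxopen
    have hfeq : a * f x₁ + c * f x₂ = b := by
      rw [← hfxb, ← hxeq]
      simp [f]
    have hab : a * b + c * b = b := by linear_combination b * hac
    have hb1 : a * f x₁ ≤ a * b := mul_le_mul_of_nonneg_left (hle x₁ hx₁) ha.le
    have hb2 : c * f x₂ ≤ c * b := mul_le_mul_of_nonneg_left (hle x₂ hx₂) hc.le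
    have hf1 : f x₁ = b := by
      by_contra hne'
      have hlt : a * f x₁ < a * b := mul_lt_mul_of_pos_left
        (lt_of_le_of_ne (hle x₁ hx₁) hne') ha
      linarith
    have hf2 : f x₂ = b := by
      by_contra hne'
      have hlt : c * f x₂ < c * b := mul_lt_mul_of_pos_left
        (lt_of_le_of_ne (hle x₂ hx₂) hne') hc
      linarith
    exact face_subset_segment h1 h2 hconn x₁ hx₁ hf1

theorem stable_clique_iff (G : SimpleGraph V) (hG : IsPerfect G) (q : ℕ)
    (W : Fin (q + 1) → Set V) (hW : ∀ i, IsStable G (W i)) (hinj : Function.Injective W) :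
    (∀ i j, i ≠ j → IsEdgeOf (stabPolytope G) (rho (W i)) (rho (W j))) ↔
      (∀ i j, i ≠ j → ConnBipartiteIn G (sd (W i) (W j))) := by
  constructor
  · intro h i j hij
    exact edge_to_connbip (hW i) (hW j) (fun he => hij (hinj he)) (h i j hij)
  · intro h i j hij
    exact connbip_to_edge (hW i) (hW j) (fun he => hij (hinj he)) (h i j hij).1
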